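/- Let (Z_i)_{i≥1} be independent identically distributed standard Gaussian random variables on a probability space, and let M_n := max{Z_1, …, Z_n}. Define a_n := 1/√(2 log n) and b_n := √(2 log n) − (log log n + log(4π))/(2√(2 log n)). Then for every x ∈ ℝ, P((M_n − b_n)/a_n ≤ x) converges to exp(−e^{−x}) as n → ∞; that is, the rescaled maximum of n independent standard Gaussians converges in distribution to a Gumbel random variable. -/

import Mathlib

open MeasureTheory Filter ProbabilityTheory

noncomputable section

/-- The centering constant `b_n = √(2 log n) − (log log n + log 4π)/(2√(2 log n))`. -/
def gumbelCenter (n : ℕ) : ℝ :=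
  Real.sqrt (2 * Real.log n) -
    (Real.log (Real.log n) + Real.log (4 * Real.pi)) / (2 * Real.sqrt (2 * Real.log n))

/-- The scaling constant `a_n = 1/√(2 log n)`. -/
def gumbelScale (n : ℕ) : ℝ := 1 / Real.sqrt (2 * Real.log n)

namespace GumbelAux

open Real Set

/-- standard normal pdf -/
def npdf (t : ℝ) : ℝ := (Real.sqrt (2 * π))⁻¹ * Real.exp (-(t ^ 2 / 2))

lemma npdf_nonneg (t : ℝ) : 0 ≤ npdf t := by unfold npdf; positivity

lemma npdf_pos (t : ℝ) : 0 < npdf t := by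
  unfold npdf
  have : (0:ℝ) < Real.sqrt (2 * π) := Real.sqrt_pos.2 (by positivity)
  positivity

lemma gaussianPDFReal_eq (t : ℝ) : gaussianPDFReal 0 1 t = npdf t := by
  simp only [gaussianPDFReal, npdf, NNReal.coe_one, mul_one, sub_zero]
  norm_num [neg_div]

lemma integrable_npdf : Integrable npdf := by
  have := integrable_gaussianPDFReal 0 1
  refine this.congr (Filter.Eventually.of_forall fun t => (gaussianPDFReal_eq t) )

/-- Gaussian tail -/
def G (u : ℝ) : ℝ := ∫ t in Ioi u, npdf t

def Phi (u : ℝ) : ℝ := ((gaussianReal 0 1) (Iic u)).toReal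

lemma Phi_eq (u : ℝ) : Phi u = ∫ t in Iic u, npdf t := by
  rw [Phi, gaussianReal_apply_eq_integral 0 one_ne_zero,
    ENNReal.toReal_ofReal (setIntegral_nonneg measurableSet_Iic
      (fun t _ => gaussianPDFReal_nonneg 0 1 t))]
  exact setIntegral_congr_fun measurableSet_Iic fun t _ => gaussianPDFReal_eq t

lemma Phi_add_G (u : ℝ) : Phi u + G u = 1 := by
  rw [Phi_eq, G, intervalIntegral.integral_Iic_add_Ioi integrable_npdf.integrableOn integrable_npdf.integrableOn]
  have h := integral_gaussianPDFReal_eq_one 0 (v := 1) one_ne_zero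
  rw [← h]
  exact integral_congr_ae (Filter.Eventually.of_forall fun t => (gaussianPDFReal_eq t).symm)

lemma hasDerivAt_neg_npdf_div {t : ℝ} (ht : t ≠ 0) :
    HasDerivAt (fun s => -npdf s / s) ((1 + 1 / t ^ 2) * npdf t) t := by
  have h1 : HasDerivAt (fun s : ℝ => -(s ^ 2 / 2)) (-t) t := by
    have h := ((hasDerivAt_pow 2 t).div_const 2).neg
    simp at h
    exact h
  have h2 : HasDerivAt (fun s : ℝ => Real.exp (-(s ^ 2 / 2)))
      (-t * Real.exp (-(t ^ 2 / 2))) t := by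
    simpa [mul_comm] using h1.exp
  have h3 : HasDerivAt (fun s : ℝ => -npdf s)
      ((Real.sqrt (2 * π))⁻¹ * (t * Real.exp (-(t ^ 2 / 2)))) t := by
    unfold npdf
    have h := (h2.const_mul (Real.sqrt (2 * π))⁻¹).neg
    simp [mul_comm, mul_assoc, neg_mul, mul_neg] at h ⊢
    exact h
  have h4 := h3.div (hasDerivAt_id t) ht
  refine h4.congr_deriv ?_
  simp only [id]
  unfold npdf
  field_simp
  ring

lemma tendsto_npdf : Tendsto npdf atTop (nhds 0) := by
  have h1 : Tendsto (fun t : ℝ => -(t ^ 2 / 2)) atTop atBot := by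
    apply tendsto_neg_atBot_iff.mpr
    exact (tendsto_pow_atTop two_ne_zero).atTop_div_const two_pos
  have h2 : Tendsto (fun t : ℝ => Real.exp (-(t ^ 2 / 2))) atTop (nhds 0) :=
    Real.tendsto_exp_atBot.comp h1
  have h3 := h2.const_mul (Real.sqrt (2 * π))⁻¹
  rw [mul_zero] at h3
  exact h3

lemma tendsto_neg_npdf_div : Tendsto (fun t => -npdf t / t) atTop (nhds 0) := by
  have h := (tendsto_npdf.neg).mul tendsto_inv_atTop_zero
  simpa [div_eq_mul_inv] using h

lemma mills_eq {u : ℝ} (hu : 0 < u) :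
    ∫ t in Ioi u, (1 + 1 / t ^ 2) * npdf t = npdf u / u := by
  have h := integral_Ioi_of_hasDerivAt_of_nonneg'
    (g := fun s => -npdf s / s) (g' := fun t => (1 + 1 / t ^ 2) * npdf t) (a := u) (l := 0)
    (fun t ht => hasDerivAt_neg_npdf_div (lt_of_lt_of_le hu ht).ne')
    (fun t _ => mul_nonneg (by positivity) (npdf_nonneg t))
    tendsto_neg_npdf_div
  rw [h]; ring

lemma mills_integrable {u : ℝ} (hu : 0 < u) :
    IntegrableOn (fun t => (1 + 1 / t ^ 2) * npdf t) (Ioi u) :=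
  integrableOn_Ioi_deriv_of_nonneg'
    (fun t ht => hasDerivAt_neg_npdf_div (lt_of_lt_of_le hu ht).ne')
    (fun t _ => mul_nonneg (by positivity) (npdf_nonneg t))
    tendsto_neg_npdf_div

lemma G_le {u : ℝ} (hu : 0 < u) : G u ≤ npdf u / u := by
  rw [← mills_eq hu, G]
  refine setIntegral_mono_on integrable_npdf.integrableOn (mills_integrable hu)
    measurableSet_Ioi fun t ht => ?_
  have := npdf_nonneg t
  have h2 : (0:ℝ) ≤ 1 / t ^ 2 := by positivity
  nlinarith

lemma le_G {u : ℝ} (hu : 0 < u) : npdf u / u ≤ (1 + 1 / u ^ 2) * G u := by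
  rw [← mills_eq hu, G, ← integral_const_mul]
  refine setIntegral_mono_on (mills_integrable hu)
    (integrable_npdf.integrableOn.const_mul _) measurableSet_Ioi fun t ht => ?_
  have h1 := npdf_nonneg t
  have h2 : 1 / t ^ 2 ≤ 1 / u ^ 2 := by
    apply one_div_le_one_div_of_le (by positivity)
    have : u ≤ t := le_of_lt ht
    nlinarith
  nlinarith

lemma G_pos (u : ℝ) : 0 < G u := by
  have hsub : ∫ t in Ioc u (u+1), npdf t ≤ G u := by
    apply setIntegral_mono_set integrable_npdf.integrableOn
      (Filter.Eventually.of_forall fun t => npdf_nonneg t)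
    exact Filter.Eventually.of_forall fun t ht => ht.1
  have hpos : 0 < ∫ t in Ioc u (u+1), npdf t := by
    rw [← intervalIntegral.integral_of_le (by linarith)]
    apply intervalIntegral.intervalIntegral_pos_of_pos
      integrable_npdf.intervalIntegrable (fun t => npdf_pos t) (by linarith)
  linarith



lemma meas_sup_eq
    {Ω : Type*} [MeasurableSpace Ω] (P : Measure Ω) [IsProbabilityMeasure P]
    (Z : ℕ → Ω → ℝ)
    (hmeas : ∀ i, Measurable (Z i))
    (hindep : iIndepFun Z P)
    (hdist : ∀ i, P.map (Z i) = gaussianReal 0 1)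
    (u : ℝ) (n : ℕ) (hn : 1 ≤ n) :
    (P {ω | (⨆ i : Fin n, Z (i.1 + 1) ω) ≤ u}).toReal = Phi u ^ n := by
  have hne : Nonempty (Fin n) := ⟨⟨0, hn⟩⟩
  have hset : {ω | (⨆ i : Fin n, Z (i.1 + 1) ω) ≤ u}
      = ⋂ j ∈ Finset.Icc 1 n, Z j ⁻¹' (Iic u) := by
    ext ω
    simp only [mem_setOf_eq, mem_iInter, mem_preimage, mem_Iic, Finset.mem_Icc]
    rw [ciSup_le_iff (Set.Finite.bddAbove (Set.finite_range _))]
    constructor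
    · rintro h j ⟨h1, h2⟩
      have := h ⟨j - 1, by omega⟩
      simpa [Nat.sub_add_cancel h1] using this
    · intro h i
      exact h (i.1 + 1) ⟨by omega, by omega⟩
  rw [hset, hindep.meas_biInter (fun j _ => ⟨Iic u, measurableSet_Iic, rfl⟩)]
  have hZ : ∀ j, P (Z j ⁻¹' Iic u) = (gaussianReal 0 1) (Iic u) := by
    intro j
    rw [← hdist j, Measure.map_apply (hmeas j) measurableSet_Iic]
  rw [Finset.prod_congr rfl (fun j _ => hZ j), Finset.prod_const, Nat.card_Icc]
  simp [Phi, ENNReal.toReal_pow]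



/-- the threshold `u_n = b_n + a_n x` -/
def uu (x : ℝ) (n : ℕ) : ℝ := gumbelCenter n + gumbelScale n * x

def ss (n : ℕ) : ℝ := Real.sqrt (2 * Real.log n)

def dd (x : ℝ) (n : ℕ) : ℝ :=
  (x - (Real.log (Real.log n) + Real.log (4 * π)) / 2) / ss n

lemma ss_pos {n : ℕ} (hn : 0 < Real.log n) : 0 < ss n :=
  Real.sqrt_pos.2 (by positivity)

lemma uu_eq {n : ℕ} (hn : 0 < Real.log n) (x : ℝ) : uu x n = ss n + dd x n := by
  have hs := ss_pos hn
  unfold uu gumbelCenter gumbelScale dd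
  rw [show Real.sqrt (2 * Real.log n) = ss n from rfl]
  field_simp
  ring

lemma key_identity {n : ℕ} (hn : 0 < Real.log n) (x : ℝ) :
    (n : ℝ) * npdf (uu x n) = Real.exp (-x) * Real.exp (-(dd x n ^ 2 / 2)) * ss n := by
  have hn0 : n ≠ 0 := by rintro rfl; simp at hn
  have hnpos : 0 < (n : ℝ) := by positivity
  set L := Real.log n with hLdef
  set s := ss n with hsdef
  set c : ℝ := (Real.log L + Real.log (4 * π)) / 2 with hcdef
  set d := dd x n with hddef
  have hspos : 0 < s := ss_pos hn
  have hs2 : s ^ 2 = 2 * L := Real.sq_sqrt (by positivity)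
  have hsd : s * d = x - c := by
    rw [hddef, dd, ← hsdef, ← hLdef]
    field_simp
    rw [hcdef]
    ring
  have hexpL : Real.exp L = (n : ℝ) := Real.exp_log hnpos
  have hexpc : Real.exp c = s * Real.sqrt (2 * π) := by
    have hLp : (0:ℝ) < L * (4 * π) := by positivity
    have h1 : c = Real.log (L * (4 * π)) / 2 := by
      rw [hcdef, Real.log_mul hn.ne' (by positivity)]
    have h2 : Real.exp (Real.log (L * (4 * π)) / 2) = Real.sqrt (L * (4 * π)) := by
      rw [Real.sqrt_eq_rpow, Real.rpow_def_of_pos hLp, mul_one_div]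
    rw [h1, h2, show L * (4 * π) = (2 * L) * (2 * π) by ring,
      Real.sqrt_mul (by positivity)]
    rfl
  have harg : -(uu x n ^ 2 / 2) = -L + (-x + (c + -(d ^ 2 / 2))) := by
    rw [uu_eq hn x, ← hsdef, ← hddef]
    linear_combination (-1/2 : ℝ) * hs2 - hsd
  have hsqrtpos : (0:ℝ) < Real.sqrt (2 * π) := Real.sqrt_pos.2 (by positivity)
  rw [npdf, harg, Real.exp_add, Real.exp_add, Real.exp_add, hexpc, Real.exp_neg, hexpL]
  field_simp

lemma sqrt_tendsto : Tendsto Real.sqrt atTop atTop := by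
  have h := tendsto_rpow_atTop (y := (1/2 : ℝ)) (by norm_num)
  exact h.congr fun y => (Real.sqrt_eq_rpow y).symm

lemma L_tendsto : Tendsto (fun n : ℕ => Real.log n) atTop atTop :=
  Real.tendsto_log_atTop.comp tendsto_natCast_atTop_atTop

lemma ss_tendsto : Tendsto ss atTop atTop := by
  apply sqrt_tendsto.comp
  exact (tendsto_const_mul_atTop_of_pos two_pos).mpr L_tendsto

lemma hlogsqrt : Tendsto (fun y : ℝ => Real.log y / Real.sqrt y) atTop (nhds 0) := by
  have h := (isLittleO_log_rpow_atTop (by norm_num : (0:ℝ) < 1/2)).tendsto_div_nhds_zero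
  exact h.congr fun y => by rw [Real.sqrt_eq_rpow]

lemma dd_tendsto (x : ℝ) : Tendsto (dd x) atTop (nhds 0) := by
  have t1 : Tendsto (fun n : ℕ => (x - Real.log (4 * π) / 2) * (ss n)⁻¹) atTop (nhds 0) := by
    have := (tendsto_inv_atTop_zero.comp ss_tendsto).const_mul (x - Real.log (4 * π) / 2)
    simpa using this
  have t2 : Tendsto (fun n : ℕ =>
      (Real.sqrt 2 * 2)⁻¹ * (Real.log (Real.log n) / Real.sqrt (Real.log n))) atTop (nhds 0) := by
    have := (hlogsqrt.comp L_tendsto).const_mul (Real.sqrt 2 * 2)⁻¹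
    simpa using this
  have h := t1.sub t2
  rw [sub_zero] at h
  apply h.congr'
  filter_upwards [eventually_gt_atTop 1] with n hn
  have hL : 0 < Real.log n := Real.log_pos (by exact_mod_cast hn)
  have hsL : Real.sqrt (Real.log n) > 0 := Real.sqrt_pos.2 hL
  have hss : ss n = Real.sqrt 2 * Real.sqrt (Real.log n) := Real.sqrt_mul (by norm_num) _
  have hs2 : Real.sqrt 2 > 0 := Real.sqrt_pos.2 (by norm_num)
  rw [dd, hss]
  field_simp
  ring

lemma uu_tendsto (x : ℝ) : Tendsto (uu x) atTop atTop := by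
  apply tendsto_atTop_mono' atTop (f₁ := fun n => ss n - 1)
  · filter_upwards [(dd_tendsto x).eventually (eventually_ge_nhds (by norm_num : (-1:ℝ) < 0)),
      eventually_gt_atTop 1] with n hd hn
    have hL : 0 < Real.log n := Real.log_pos (by exact_mod_cast hn)
    rw [uu_eq hL]
    linarith
  · exact tendsto_atTop_add_const_right atTop (-1) ss_tendsto

lemma tendsto_n_npdf (x : ℝ) :
    Tendsto (fun n : ℕ => (n : ℝ) * npdf (uu x n) / uu x n) atTop (nhds (Real.exp (-x))) := by
  have h1 : Tendsto (fun n : ℕ => Real.exp (-(dd x n ^ 2 / 2))) atTop (nhds 1) := by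
    have hd := (((dd_tendsto x).pow 2).div_const 2).neg
    have := (Real.continuous_exp.tendsto 0).comp (by simpa using hd)
    simpa [Function.comp_def] using this
  have h2 : Tendsto (fun n : ℕ => dd x n / ss n) atTop (nhds 0) := by
    have := (dd_tendsto x).mul (tendsto_inv_atTop_zero.comp ss_tendsto)
    simpa [div_eq_mul_inv] using this
  have h3 : Tendsto (fun n : ℕ => (1 + dd x n / ss n)⁻¹) atTop (nhds 1) := by
    have := (tendsto_const_nhds.add h2).inv₀ (by norm_num : (1 + 0 : ℝ) ≠ 0)
    simpa using this
  have h := ((tendsto_const_nhds (x := Real.exp (-x))).mul h1).mul h3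
  rw [mul_one, mul_one] at h
  apply h.congr'
  filter_upwards [eventually_gt_atTop 1,
    (dd_tendsto x).eventually (eventually_ge_nhds (by norm_num : (-1/2:ℝ) < 0)),
    ss_tendsto.eventually_ge_atTop 1] with n hn hd hs
  have hL : 0 < Real.log n := Real.log_pos (by exact_mod_cast hn)
  have hspos : 0 < ss n := ss_pos hL
  have hsd : 0 < ss n + dd x n := by linarith
  rw [key_identity hL x, uu_eq hL x]
  field_simp


lemma tendsto_nG (x : ℝ) :
    Tendsto (fun n : ℕ => (n : ℝ) * G (uu x n)) atTop (nhds (Real.exp (-x))) := by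
  have hup := tendsto_n_npdf x
  have hinv2 : Tendsto (fun n : ℕ => (1 + 1 / uu x n ^ 2)⁻¹) atTop (nhds 1) := by
    have h0 : Tendsto (fun n : ℕ => 1 / uu x n ^ 2) atTop (nhds 0) := by
      have h := (tendsto_inv_atTop_zero.comp (uu_tendsto x)).mul
        (tendsto_inv_atTop_zero.comp (uu_tendsto x))
      rw [mul_zero] at h
      exact h.congr fun n => by simp [Function.comp]; ring
    have := (tendsto_const_nhds.add h0).inv₀ (by norm_num : (1 + 0 : ℝ) ≠ 0)
    simpa using this
  have hlow := hup.mul hinv2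
  rw [mul_one] at hlow
  apply tendsto_of_tendsto_of_tendsto_of_le_of_le' hlow hup
  · filter_upwards [(uu_tendsto x).eventually_gt_atTop 0] with n hu
    have h := le_G hu
    have hc : (0:ℝ) < 1 + 1 / uu x n ^ 2 := by positivity
    have hn0 : (0:ℝ) ≤ n := Nat.cast_nonneg n
    have h2 : (n:ℝ) * (npdf (uu x n) / uu x n) ≤ (n:ℝ) * ((1 + 1 / uu x n ^ 2) * G (uu x n)) :=
      mul_le_mul_of_nonneg_left h hn0
    rw [mul_inv_le_iff₀ hc, mul_div_assoc]
    exact le_trans h2 (le_of_eq (by ring))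
  · filter_upwards [(uu_tendsto x).eventually_gt_atTop 0] with n hu
    have hn0 : (0:ℝ) ≤ n := Nat.cast_nonneg n
    rw [mul_div_assoc]
    exact mul_le_mul_of_nonneg_left (G_le hu) hn0

lemma tendsto_G_zero (x : ℝ) : Tendsto (fun n : ℕ => G (uu x n)) atTop (nhds 0) := by
  have hinv : Tendsto (fun n : ℕ => ((n : ℝ))⁻¹) atTop (nhds 0) :=
    tendsto_inv_atTop_zero.comp tendsto_natCast_atTop_atTop
  have h := (tendsto_nG x).mul hinv
  rw [mul_zero] at h
  apply h.congr'
  filter_upwards [eventually_gt_atTop 0] with n hn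
  have hne : (n:ℝ) ≠ 0 := Nat.cast_ne_zero.2 hn.ne'
  field_simp

lemma slope_log : Tendsto (fun y : ℝ => Real.log (1 - y) / (-y)) (nhdsWithin 0 {0}ᶜ) (nhds 1) := by
  have h := Real.hasDerivAt_log one_ne_zero
  rw [hasDerivAt_iff_tendsto_slope, inv_one] at h
  have hmap : Tendsto (fun y : ℝ => 1 - y) (nhdsWithin (0:ℝ) {0}ᶜ) (nhdsWithin (1:ℝ) {1}ᶜ) := by
    rw [tendsto_nhdsWithin_iff]
    constructor
    · have h1 : Tendsto (fun y : ℝ => 1 - y) (nhds 0) (nhds 1) := by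
        have hc : Continuous (fun y : ℝ => 1 - y) := by continuity
        have := hc.tendsto (0:ℝ)
        simpa using this
      exact h1.mono_left nhdsWithin_le_nhds
    · filter_upwards [self_mem_nhdsWithin] with y hy
      simp only [Set.mem_compl_iff, Set.mem_singleton_iff] at hy ⊢
      intro hc
      apply hy
      linarith
  have h2 := h.comp hmap
  apply h2.congr
  intro y
  simp only [Function.comp_apply, slope_def_field, Real.log_one]
  rw [sub_zero, show (1:ℝ) - y - 1 = -y by ring]

lemma tendsto_Phi_pow (x : ℝ) :
    Tendsto (fun n : ℕ => Phi (uu x n) ^ n) atTop (nhds (Real.exp (-Real.exp (-x)))) := by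
  have hG0 := tendsto_G_zero x
  have hGmem : Tendsto (fun n : ℕ => G (uu x n)) atTop (nhdsWithin 0 {0}ᶜ) := by
    rw [tendsto_nhdsWithin_iff]
    exact ⟨hG0, Filter.Eventually.of_forall fun n => by
      simp only [Set.mem_compl_iff, Set.mem_singleton_iff]
      exact (G_pos _).ne'⟩
  have hslope := slope_log.comp hGmem
  have hprod := (tendsto_nG x).mul hslope
  rw [mul_one] at hprod
  have hlog : Tendsto (fun n : ℕ => (n:ℝ) * Real.log (1 - G (uu x n))) atTop
      (nhds (-Real.exp (-x))) := by
    have h := hprod.neg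
    apply h.congr
    intro n
    have hg : G (uu x n) ≠ 0 := (G_pos (uu x n)).ne'
    simp only [Function.comp_apply]
    field_simp
  have hexp := (Real.continuous_exp.tendsto _).comp hlog
  apply hexp.congr'
  filter_upwards [hG0.eventually (eventually_lt_nhds (by norm_num : (0:ℝ) < 1))] with n hGlt
  have hPhi : Phi (uu x n) = 1 - G (uu x n) := by linarith [Phi_add_G (uu x n)]
  have hpos : 0 < 1 - G (uu x n) := by linarith
  simp only [Function.comp_apply]
  rw [Real.exp_nat_mul, Real.exp_log hpos, hPhi]

end GumbelAux

open GumbelAux in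
/-- **Gumbel limit for maxima of i.i.d. standard Gaussians.** If `(Z_i)` are independent
standard Gaussian random variables and `M_n = max{Z_1,…,Z_n}`, then for every `x ∈ ℝ`,
`P((M_n − b_n)/a_n ≤ x) → exp(−e^{−x})` as `n → ∞`. -/
theorem gumbel_limit_of_iid_gaussian_maxima
    {Ω : Type*} [MeasurableSpace Ω] (P : Measure Ω) [IsProbabilityMeasure P]
    (Z : ℕ → Ω → ℝ)
    (hmeas : ∀ i, Measurable (Z i))
    (hindep : iIndepFun Z P)
    (hdist : ∀ i, P.map (Z i) = gaussianReal 0 1)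
    (x : ℝ) :
    Tendsto
      (fun n : ℕ =>
        (P {ω | ((⨆ i : Fin n, Z (i.1 + 1) ω) - gumbelCenter n) / gumbelScale n ≤ x}).toReal)
      atTop (nhds (Real.exp (-Real.exp (-x)))) := by
  apply Filter.Tendsto.congr' _ (tendsto_Phi_pow x)
  filter_upwards [eventually_ge_atTop 2] with n hn
  have hL : 0 < Real.log n := Real.log_pos (by exact_mod_cast Nat.lt_of_lt_of_le one_lt_two hn)
  have ha : 0 < gumbelScale n := by
    rw [gumbelScale]
    exact div_pos one_pos (ss_pos hL)
  have hset : {ω | ((⨆ i : Fin n, Z (i.1 + 1) ω) - gumbelCenter n) / gumbelScale n ≤ x}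
      = {ω | (⨆ i : Fin n, Z (i.1 + 1) ω) ≤ uu x n} := by
    ext ω
    simp only [Set.mem_setOf_eq]
    rw [div_le_iff₀ ha, uu, sub_le_iff_le_add]
    constructor <;> intro h <;> nlinarith [h]
  rw [hset, meas_sup_eq P Z hmeas hindep hdist (uu x n) n (by omega)]
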